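/- Let a ≤ b be integers. There exists an integer l ≥ 0 depending only on b−a such that: for every commutative ring R, every π ∈ R, every morphism α : M_1^• → M_2^• of π-[a,b]-pseudo-coherent cochain complexes of R-modules, and all given π-[a,b]-pseudo resolutions f_i : P_i^• → M_i^• (i = 1,2), there exists a morphism of complexes α' : P_1^• → P_2^• such that (π^l·α)∘f_1 is homotopic to f_2∘α'. -/

import Mathlib

open CategoryTheory

section PseudoCoherence

variable {R : Type*} [CommRing R]

/-- A linear map (in `ModuleCat R`) is a `π`-isomorphism if its kernel and cokernel are
annihilated by `π`. -/
def IsPiIsomorphism (π : R) {M N : ModuleCat R} (f : M ⟶ N) : Prop :=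
  (∀ x : M, f x = 0 → π • x = 0) ∧ (∀ y : N, ∃ x : M, π • y = f x)

/-- A linear map (in `ModuleCat R`) is `π`-surjective if its cokernel is annihilated by `π`. -/
def IsPiSurjective (π : R) {M N : ModuleCat R} (f : M ⟶ N) : Prop :=
  ∀ y : N, ∃ x : M, π • y = f x

/-- A morphism of cochain complexes of `R`-modules `f : P^• ⟶ M^•` is a `π`-`[a,b]`-pseudo
resolution if `P^•` is a complex of finite free `R`-modules vanishing outside `[a,b]`, and
`H^i(f)` is a `π`-isomorphism for `i > a` and `π`-surjective for `i = a`. -/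
def IsPiPseudoResolution (π : R) (a b : ℤ) {P M : CochainComplex (ModuleCat R) ℤ}
    (f : P ⟶ M) : Prop :=
  (∀ i : ℤ, Module.Free R (P.X i)) ∧ (∀ i : ℤ, Module.Finite R (P.X i)) ∧
  (∀ i : ℤ, i < a ∨ b < i → ∀ x : P.X i, x = 0) ∧
  (∀ i : ℤ, a < i → IsPiIsomorphism π (HomologicalComplex.homologyMap f i)) ∧
  IsPiSurjective π (HomologicalComplex.homologyMap f a)

/-- A cochain complex of `R`-modules is `π`-`[a,b]`-pseudo-coherent if it vanishes in degrees
`> b` and admits a `π`-`[a,b]`-pseudo resolution. -/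
def IsPiPseudoCoherent (π : R) (a b : ℤ) (M : CochainComplex (ModuleCat R) ℤ) : Prop :=
  (∀ i : ℤ, b < i → ∀ x : M.X i, x = 0) ∧
  ∃ (P : CochainComplex (ModuleCat R) ℤ) (f : P ⟶ M), IsPiPseudoResolution π a b f

end PseudoCoherence


section AuxLift
variable {R : Type*} [CommRing R]

def IsPiSurjective' (π : R) {M N : ModuleCat R} (f : M ⟶ N) : Prop :=
  ∀ y : N, ∃ x : M, π • y = f x

noncomputable def cls (S : ShortComplex (ModuleCat R)) (z : S.X₂) (hz : S.g z = 0) : S.homology :=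
  S.homologyπ (S.moduleCatCyclesIso.inv ⟨z, hz⟩)

lemma cls_smul (S : ShortComplex (ModuleCat R)) (π : R) (z : S.X₂) (hz : S.g z = 0) :
    cls S (π • z) (by simp [hz]) = π • cls S z hz := by
  unfold cls
  have : (⟨π • z, by simp [LinearMap.mem_ker, hz]⟩ : LinearMap.ker S.g.hom)
      = π • (⟨z, hz⟩ : LinearMap.ker S.g.hom) := Subtype.ext rfl
  rw [this]
  exact (S.homologyπ.hom.comp S.moduleCatCyclesIso.inv.hom).map_smul π _

lemma cls_add (S : ShortComplex (ModuleCat R)) (z w : S.X₂) (hz : S.g z = 0) (hw : S.g w = 0) :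
    cls S (z + w) (by simp [hz, hw]) = cls S z hz + cls S w hw := by
  unfold cls
  have : (⟨z + w, by simp [LinearMap.mem_ker, hz, hw]⟩ : LinearMap.ker S.g.hom)
      = (⟨z, hz⟩ : LinearMap.ker S.g.hom) + ⟨w, hw⟩ := Subtype.ext rfl
  rw [this]
  exact (S.homologyπ.hom.comp S.moduleCatCyclesIso.inv.hom).map_add _ _

lemma cls_surjective (S : ShortComplex (ModuleCat R)) (h : S.homology) :
    ∃ (z : S.X₂) (hz : S.g z = 0), cls S z hz = h := by
  obtain ⟨c, rfl⟩ := (ModuleCat.epi_iff_surjective S.homologyπ).1 inferInstance h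
  obtain ⟨w, rfl⟩ := (ModuleCat.epi_iff_surjective S.moduleCatCyclesIso.inv).1
    (inferInstance) c
  exact ⟨w.1, w.2, rfl⟩

lemma cls_rewrite (S : ShortComplex (ModuleCat R)) (z : S.X₂) (hz : S.g z = 0) :
    cls S z hz = S.moduleCatHomologyIso.inv (S.moduleCatLeftHomologyData.π (⟨z, hz⟩ : LinearMap.ker S.g.hom)) :=
  ConcreteCategory.congr_hom S.moduleCatCyclesIso_inv_π (⟨z, hz⟩ : LinearMap.ker S.g.hom)

lemma cls_eq_zero_iff (S : ShortComplex (ModuleCat R)) (z : S.X₂) (hz : S.g z = 0) :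
    cls S z hz = 0 ↔ ∃ m, S.f m = z := by
  rw [cls_rewrite]
  rw [show (0 : S.homology) = S.moduleCatHomologyIso.inv 0 by simp]
  rw [Function.Injective.eq_iff ((ModuleCat.mono_iff_injective _).1 inferInstance)]
  show (LinearMap.range S.moduleCatToCycles).mkQ _ = 0 ↔ _
  rw [Submodule.mkQ_apply, Submodule.Quotient.mk_eq_zero]
  constructor
  · rintro ⟨m, hm⟩
    exact ⟨m, congrArg Subtype.val hm⟩
  · rintro ⟨m, hm⟩
    exact ⟨m, Subtype.ext hm⟩

lemma cls_naturality {S₁ S₂ : ShortComplex (ModuleCat R)} (φ : S₁ ⟶ S₂) (z : S₁.X₂)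
    (hz : S₁.g z = 0) :
    ShortComplex.homologyMap φ (cls S₁ z hz) = cls S₂ (φ.τ₂ z)
      (by have := ConcreteCategory.congr_hom φ.comm₂₃ z
          simp only [ConcreteCategory.comp_apply] at this
          rw [this, hz, map_zero]) := by
  unfold cls
  have h1 := ConcreteCategory.congr_hom (ShortComplex.homologyπ_naturality φ)
    (S₁.moduleCatCyclesIso.inv ⟨z, hz⟩)
  simp only [ConcreteCategory.comp_apply] at h1
  rw [h1]
  congr 1
  apply (ModuleCat.mono_iff_injective S₂.iCycles).1 inferInstance
  have h2 := ConcreteCategory.congr_hom (ShortComplex.cyclesMap_i φ) (S₁.moduleCatCyclesIso.inv ⟨z, hz⟩)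
  have h3 := ConcreteCategory.congr_hom S₁.moduleCatCyclesIso_inv_iCycles (⟨z, hz⟩ : LinearMap.ker S₁.g.hom)
  have h4 := ConcreteCategory.congr_hom S₂.moduleCatCyclesIso_inv_iCycles
    (⟨φ.τ₂ z, by have := ConcreteCategory.congr_hom φ.comm₂₃ z
                 simp only [ConcreteCategory.comp_apply] at this
                 rw [LinearMap.mem_ker, this, hz, map_zero]⟩ : LinearMap.ker S₂.g.hom)
  have h2' : S₂.iCycles ((ShortComplex.cyclesMap φ) (S₁.moduleCatCyclesIso.inv ⟨z, hz⟩))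
      = φ.τ₂ (S₁.iCycles (S₁.moduleCatCyclesIso.inv ⟨z, hz⟩)) := h2
  have h3' : S₁.iCycles (S₁.moduleCatCyclesIso.inv ⟨z, hz⟩) = z := h3
  have h4' : S₂.iCycles (S₂.moduleCatCyclesIso.inv ⟨φ.τ₂ z, _⟩) = φ.τ₂ z := h4
  rw [h2', h3', h4']

lemma cls_sub (S : ShortComplex (ModuleCat R)) (z w : S.X₂) (hz : S.g z = 0) (hw : S.g w = 0) :
    cls S (z - w) (by simp [hz, hw]) = cls S z hz - cls S w hw := by
  unfold cls
  have : (⟨z - w, by simp [LinearMap.mem_ker, hz, hw]⟩ : LinearMap.ker S.g.hom)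
      = (⟨z, hz⟩ : LinearMap.ker S.g.hom) - ⟨w, hw⟩ := Subtype.ext rfl
  rw [this]
  exact (S.homologyπ.hom.comp S.moduleCatCyclesIso.inv.hom).map_sub _ _

section Complexes
open HomologicalComplex
variable {K L : CochainComplex (ModuleCat R) ℤ} (f : K ⟶ L) (π : R)

lemma extract_surj (i j k : ℤ) (hj : (ComplexShape.up ℤ).prev i = j)
    (hk : (ComplexShape.up ℤ).next i = k)
    (h : IsPiSurjective' π (HomologicalComplex.homologyMap f i))
    (y : L.X i) (hy : L.d i k y = 0) :
    ∃ (z : K.X i) (m : L.X j),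
      K.d i k z = 0 ∧ π • y = f.f i z + L.d j i m := by
  subst hj hk
  have hy' : (L.sc i).g y = 0 := hy
  obtain ⟨x, hx⟩ := h (cls (L.sc i) y hy')
  obtain ⟨z, hz, hclz⟩ := cls_surjective (K.sc i) x
  have hnat := cls_naturality ((HomologicalComplex.shortComplexFunctor _ _ i).map f) z hz
  rw [hclz] at hnat
  have hfz : (L.sc i).g (f.f i z) = 0 := by
    have hc : L.d i ((ComplexShape.up ℤ).next i) (f.f i z)
        = f.f ((ComplexShape.up ℤ).next i) (K.d i ((ComplexShape.up ℤ).next i) z) :=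
      ConcreteCategory.congr_hom (f.comm i ((ComplexShape.up ℤ).next i)) z
    have hz'' : K.d i ((ComplexShape.up ℤ).next i) z = 0 := hz
    show L.d i ((ComplexShape.up ℤ).next i) (f.f i z) = 0
    rw [hc, hz'', map_zero]
  have key : cls (L.sc i) (π • y - f.f i z) (by
      show (L.sc i).g _ = 0
      exact ((L.sc i).g.hom.map_sub (π • y) (f.f i z)).trans (sub_eq_zero.2 ((((L.sc i).g.hom.map_smul π y).trans
        ((congrArg (π • ·) hy').trans (smul_zero π))).trans hfz.symm))) = 0 := by
    have hnat' : (HomologicalComplex.homologyMap f i) x = cls (L.sc i) (f.f i z) hfz := hnat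
    exact (cls_sub _ _ _ (((L.sc i).g.hom.map_smul π y).trans ((congrArg (π • ·) hy').trans (smul_zero π))) hfz).trans
      ((congrArg₂ (fun a b : ↑(L.sc i).homology => a - b) ((cls_smul _ _ _ _).trans hx) hnat'.symm).trans (sub_self _))
  replace key := (cls_eq_zero_iff _ _ _).1 key
  obtain ⟨m, hm⟩ := key
  refine ⟨z, m, hz, ?_⟩
  have hm' : L.d ((ComplexShape.up ℤ).prev i) i m = π • y - f.f i z := hm
  exact eq_add_of_sub_eq' hm'.symm

lemma extract_inj (i j k : ℤ) (hj : (ComplexShape.up ℤ).prev i = j)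
    (hk : (ComplexShape.up ℤ).next i = k)
    (h : ∀ x, (HomologicalComplex.homologyMap f i) x = 0 → π • x = 0)
    (z : K.X i) (hz : K.d i k z = 0) (m : L.X j)
    (hm : f.f i z = L.d j i m) :
    ∃ w : K.X j, π • z = K.d j i w := by
  subst hj hk
  have hz' : (K.sc i).g z = 0 := hz
  have hnat := cls_naturality ((HomologicalComplex.shortComplexFunctor _ _ i).map f) z hz'
  have hzero : π • cls (K.sc i) z hz' = 0 := by
    apply h
    have hfz : (L.sc i).g (f.f i z) = 0 := by
      have hc : L.d i ((ComplexShape.up ℤ).next i) (f.f i z)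
          = f.f ((ComplexShape.up ℤ).next i) (K.d i ((ComplexShape.up ℤ).next i) z) :=
        ConcreteCategory.congr_hom (f.comm i ((ComplexShape.up ℤ).next i)) z
      have hz'' : K.d i ((ComplexShape.up ℤ).next i) z = 0 := hz
      show L.d i ((ComplexShape.up ℤ).next i) (f.f i z) = 0
      rw [hc, hz'', map_zero]
    have hnat' : (HomologicalComplex.homologyMap f i) (cls (K.sc i) z hz')
        = cls (L.sc i) (f.f i z) hfz := hnat
    rw [hnat']
    refine (cls_eq_zero_iff _ _ _).2 ?_
    exact ⟨m, hm.symm⟩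
  replace hzero := (cls_eq_zero_iff _ _ _).1 ((cls_smul _ _ _ _).trans hzero)
  obtain ⟨w, hw⟩ := hzero
  exact ⟨w, hw.symm⟩

end Complexes

variable {R : Type*} [CommRing R]

section Induction
open HomologicalComplex

variable {P₁ P₂ M₂ : CochainComplex (ModuleCat R) ℤ} (φ : P₁ ⟶ M₂) (f₂ : P₂ ⟶ M₂) (π : R)

/-- transport along `i + 1 - 1 = i` -/
noncomputable def DD (M : CochainComplex (ModuleCat R) ℤ) (i : ℤ) :
    M.X (i + 1 - 1) ⟶ M.X i :=
  eqToHom (congrArg M.X (add_sub_cancel_right i 1))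

lemma MC_smul_apply {A B : ModuleCat R} (r : R) (f : A ⟶ B) (x : A) : (r • f) x = r • f x := rfl

lemma d_eqToHom (M : CochainComplex (ModuleCat R) ℤ) {j j' i : ℤ} (h : j = j') (x : M.X j) :
    M.d j i x = M.d j' i (eqToHom (congrArg M.X h) x) := by
  subst h
  rfl

theorem main_induction (a b : ℤ)
    (hfree : ∀ i, Module.Free R (P₁.X i))
    (hP₁0 : ∀ i : ℤ, i < a ∨ b < i → ∀ x : P₁.X i, x = 0)
    (hinj : ∀ i : ℤ, a < i → ∀ x, (HomologicalComplex.homologyMap f₂ i) x = 0 → π • x = 0)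
    (hsurj : ∀ i : ℤ, a ≤ i → IsPiSurjective' π (HomologicalComplex.homologyMap f₂ i)) :
    ∀ n : ℕ, ∃ (g : ∀ i, P₁.X i ⟶ P₂.X i) (h : ∀ i, P₁.X i ⟶ M₂.X (i - 1)),
      (∀ i : ℤ, b + 1 - n ≤ i → ∀ x, P₂.d i (i+1) (g i x) = g (i+1) (P₁.d i (i+1) x)) ∧
      (∀ i : ℤ, b + 1 - n ≤ i → ∀ x, (π ^ (2*n)) • (φ.f i x)
        = f₂.f i (g i x) + M₂.d (i-1) i (h i x)
          + DD M₂ i (h (i+1) (P₁.d i (i+1) x))) := by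
  intro n
  induction n with
  | zero =>
    refine ⟨fun i => 0, fun i => 0, fun i hi x => ?_, fun i hi x => ?_⟩
    · show P₂.d i (i+1) ((0 : P₁.X i ⟶ P₂.X i) x) = (0 : P₁.X (i+1) ⟶ P₂.X (i+1)) (P₁.d i (i+1) x)
      show P₂.d i (i+1) 0 = (0 : P₁.X (i+1) → P₂.X (i+1))  (P₁.d i (i+1) x)
      rw [map_zero]
      rfl
    · have hx : x = 0 := hP₁0 i (Or.inr (by omega)) x
      subst hx
      show (π ^ (2*0) : R) • φ.f i 0 = f₂.f i ((0 : P₁.X i ⟶ P₂.X i) 0)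
        + M₂.d (i-1) i ((0 : P₁.X i ⟶ M₂.X (i-1)) 0) + DD M₂ i ((0 : P₁.X (i+1) ⟶ M₂.X (i+1-1)) (P₁.d i (i+1) 0))
      show (π ^ (2*0) : R) • φ.f i 0 = f₂.f i 0 + M₂.d (i-1) i 0 + DD M₂ i ((0 : P₁.X (i+1) → M₂.X (i+1-1)) (P₁.d i (i+1) 0))
      show (π ^ (2*0) : R) • φ.f i 0 = f₂.f i 0 + M₂.d (i-1) i 0 + DD M₂ i 0
      rw [map_zero (ConcreteCategory.hom (φ.f i)), map_zero (ConcreteCategory.hom (f₂.f i)), map_zero (ConcreteCategory.hom (M₂.d (i-1) i)), map_zero (ConcreteCategory.hom (DD M₂ i)),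
        smul_zero, add_zero, add_zero]
  | succ n IH =>
    obtain ⟨g, h, hg, hh⟩ := IH
    set k : ℤ := b - n with hk
    have hbound : b + 1 - ((n+1 : ℕ) : ℤ) = k := by push_cast; omega
    have hbound' : b + 1 - (n : ℤ) = k + 1 := by omega
    rw [hbound]
    by_cases hka : k < a
    · -- trivial case: P₁.X k = 0
      refine ⟨fun i => if i = k then 0 else (π^2 : R) • g i,
              fun i => if i = k then 0 else (π^2 : R) • h i, fun i hi x => ?_, fun i hi x => ?_⟩
      · beta_reduce
        rcases eq_or_lt_of_le hi with hik | hik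
        · have hik' : i = k := hik.symm
          have hx : x = 0 := hP₁0 i (Or.inl (by omega)) x
          subst hx
          rw [if_pos hik']
          have : (i:ℤ) + 1 ≠ k := by omega
          rw [if_neg this]
          show P₂.d i (i+1) ((0 : P₁.X i ⟶ P₂.X i) 0) = ((π^2:R) • g (i+1)) (P₁.d i (i+1) 0)
          rw [map_zero (ConcreteCategory.hom (0 : P₁.X i ⟶ P₂.X i)), map_zero (ConcreteCategory.hom (P₂.d i (i+1))), map_zero (ConcreteCategory.hom (P₁.d i (i+1))),
            map_zero (ConcreteCategory.hom ((π^2:R) • g (i+1)))]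
        · have h1 : i ≠ k := by omega
          have h2 : i + 1 ≠ k := by omega
          rw [if_neg h1, if_neg h2]
          have := hg i (by omega) x
          calc P₂.d i (i+1) (((π^2 : R) • g i) x) = (π^2 : R) • P₂.d i (i+1) (g i x) := by
                rw [MC_smul_apply, map_smul]
            _ = (π^2:R) • g (i+1) (P₁.d i (i+1) x) := by rw [this]
            _ = ((π^2:R) • g (i+1)) (P₁.d i (i+1) x) := rfl
      · beta_reduce
        rcases eq_or_lt_of_le hi with hik | hik
        · have hik' : i = k := hik.symm
          have hx : x = 0 := hP₁0 i (Or.inl (by omega)) x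
          subst hx
          rw [if_pos hik', if_pos hik']
          show (π ^ (2*(n+1)) : R) • φ.f i 0 = f₂.f i ((0 : P₁.X i → P₂.X i) 0)
            + M₂.d (i-1) i ((0 : P₁.X i → M₂.X (i-1)) 0) + DD M₂ i
              ((if i + 1 = k then (0 : P₁.X (i+1) ⟶ M₂.X (i+1-1)) else (π^2 : R) • h (i+1)) (P₁.d i (i+1) 0))
          rw [map_zero, map_zero]
          simp
        · have h1 : i ≠ k := by omega
          have h2 : i + 1 ≠ k := by omega
          rw [if_neg h1, if_neg h1, if_neg h2]
          have := hh i (by omega) x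
          have hpow : (π ^ (2*(n+1)) : R) = π^2 * π^(2*n) := by ring
          calc (π ^ (2*(n+1)) : R) • (φ.f i x) = (π^2:R) • ((π^(2*n):R) • φ.f i x) := by
                rw [hpow, mul_smul]
            _ = (π^2:R) • (f₂.f i (g i x) + M₂.d (i-1) i (h i x)
                  + DD M₂ i (h (i+1) (P₁.d i (i+1) x))) := by rw [this]
            _ = _ := by
                simp only [MC_smul_apply, smul_add, map_smul]
    · -- main case: a ≤ k
      push_neg at hka
      haveI := hfree k
      set bas := Module.Free.chooseBasis R (P₁.X k) with hbas
      -- construction for each basis vector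
      have construct : ∀ v : Module.Free.ChooseBasisIndex R (P₁.X k),
          ∃ (Gv : P₂.X k) (Hv : M₂.X (k-1)),
            P₂.d k (k+1) Gv = (π^2 : R) • g (k+1) (P₁.d k (k+1) (bas v)) ∧
            (π^2 : R) • ((π^(2*n) : R) • φ.f k (bas v) - DD M₂ k (h (k+1) (P₁.d k (k+1) (bas v))))
              = f₂.f k Gv + M₂.d (k-1) k Hv := by
        intro v
        set xv := bas v
        set dv := P₁.d k (k+1) xv with hdv
        set z := g (k+1) dv with hz
        have hddv : P₁.d (k+1) (k+1+1) dv = 0 := by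
          have h0 := ConcreteCategory.congr_hom (P₁.d_comp_d k (k+1) (k+1+1)) xv
          exact h0
        have hzcyc : P₂.d (k+1) (k+1+1) z = 0 := by
          rw [hz, hg (k+1) (by omega) dv, hddv, map_zero]
        set ψv := (π^(2*n) : R) • φ.f k xv - DD M₂ k (h (k+1) dv) with hψ
        have hfz : f₂.f (k+1) z = M₂.d k (k+1) ψv := by
          have h1 := hh (k+1) (by omega) dv
          rw [hddv, map_zero, map_zero, add_zero] at h1
          have hφc : φ.f (k+1) dv = M₂.d k (k+1) (φ.f k xv) :=
            (ConcreteCategory.congr_hom (φ.comm k (k+1)) xv).symm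
          have hdd : M₂.d (k+1-1) (k+1) (h (k+1) dv)
              = M₂.d k (k+1) (DD M₂ k (h (k+1) dv)) :=
            d_eqToHom M₂ (add_sub_cancel_right k 1) (h (k+1) dv)
          rw [hφc, hdd] at h1
          rw [hψ, map_sub, map_smul, h1, hz]
          abel
        -- injectivity at k+1
        obtain ⟨w, hw⟩ := extract_inj f₂ π (k+1) k (k+1+1)
          (by rw [CochainComplex.prev]; omega) (by rw [CochainComplex.next])
          (hinj (k+1) (by omega)) z hzcyc ψv hfz
        set y := π • ψv - f₂.f k w with hy
        have hycyc : M₂.d k (k+1) y = 0 := by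
          have hfc : M₂.d k (k+1) (f₂.f k w) = f₂.f (k+1) (P₂.d k (k+1) w) :=
            ConcreteCategory.congr_hom (f₂.comm k (k+1)) w
          rw [hy, map_sub, map_smul, ← hfz, hfc, ← hw, map_smul]
          abel
        -- surjectivity at k
        obtain ⟨u, m, hu, hum⟩ := extract_surj f₂ π k (k-1) (k+1)
          (by rw [CochainComplex.prev]) (by rw [CochainComplex.next])
          (hsurj k hka) y hycyc
        refine ⟨π • w + u, m, ?_, ?_⟩
        · rw [map_add, map_smul, ← hw, hu, add_zero, smul_smul, ← pow_two]
        · show (π^2 : R) • ψv = f₂.f k (π • w + u) + M₂.d (k-1) k m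
          have e1 : (π^2 : R) • ψv = π • (π • ψv) := by rw [smul_smul, pow_two]
          have e2 : f₂.f k (π • w + u) + M₂.d (k-1) k m
              = π • f₂.f k w + (f₂.f k u + M₂.d (k-1) k m) := by
            rw [map_add, map_smul]; abel
          rw [e2, ← hum, hy]
          module
      choose G H hG hH using construct
      set newg : P₁.X k ⟶ P₂.X k := ModuleCat.ofHom (bas.constr ℕ G) with hnewg
      set newh : P₁.X k ⟶ M₂.X (k-1) := ModuleCat.ofHom (bas.constr ℕ H) with hnewh
      refine ⟨fun i => if hik : i = k then (by rw [hik]; exact newg) else (π^2 : R) • g i,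
              fun i => if hik : i = k then (by rw [hik]; exact newh) else (π^2 : R) • h i,
              ?_, ?_⟩
      · intro i hi x
        beta_reduce
        rcases eq_or_lt_of_le hi with hik | hik
        · have hik' : i = k := hik.symm
          subst hik'
          rw [dif_pos rfl, dif_neg (show k + 1 ≠ k by omega)]
          show P₂.d k (k+1) (newg x) = ((π^2:R) • g (k+1)) (P₁.d k (k+1) x)
          have Key1 : (newg ≫ P₂.d k (k+1)) = (P₁.d k (k+1) ≫ ((π^2:R) • g (k+1))) := by
            refine ModuleCat.hom_ext (bas.ext fun v => ?_)
            show P₂.d k (k+1) (newg (bas v)) = ((π^2:R) • g (k+1)) (P₁.d k (k+1) (bas v))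
            rw [show newg (bas v) = G v from by rw [hnewg]; exact bas.constr_basis ℕ G v,
              hG v, MC_smul_apply]
          exact ConcreteCategory.congr_hom Key1 x
        · have h1 : i ≠ k := by omega
          have h2 : i + 1 ≠ k := by omega
          rw [dif_neg h1, dif_neg h2]
          rw [MC_smul_apply, map_smul, hg i (by omega) x, MC_smul_apply]
      · intro i hi x
        beta_reduce
        rcases eq_or_lt_of_le hi with hik | hik
        · have hik' : i = k := hik.symm
          subst hik'
          rw [dif_pos rfl, dif_pos rfl, dif_neg (show k + 1 ≠ k by omega)]
          show (π^(2*(n+1)):R) • φ.f k x = f₂.f k (newg x) + M₂.d (k-1) k (newh x)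
            + DD M₂ k (((π^2:R) • h (k+1)) (P₁.d k (k+1) x))
          have Key2 : ((π^(2*(n+1)):R) • φ.f k : P₁.X k ⟶ M₂.X k)
              = (newg ≫ f₂.f k) + (newh ≫ M₂.d (k-1) k)
                + (P₁.d k (k+1) ≫ (((π^2:R) • h (k+1)) ≫ DD M₂ k)) := by
            refine ModuleCat.hom_ext (bas.ext fun v => ?_)
            show (π^(2*(n+1)):R) • φ.f k (bas v) = f₂.f k (newg (bas v))
              + M₂.d (k-1) k (newh (bas v))
              + DD M₂ k (((π^2:R) • h (k+1)) (P₁.d k (k+1) (bas v)))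
            rw [show newg (bas v) = G v from by rw [hnewg]; exact bas.constr_basis ℕ G v,
              show newh (bas v) = H v from by rw [hnewh]; exact bas.constr_basis ℕ H v,
              ← hH v, MC_smul_apply, map_smul]
            module
          have := ConcreteCategory.congr_hom Key2 x
          exact this
        · have h1 : i ≠ k := by omega
          have h2 : i + 1 ≠ k := by omega
          rw [dif_neg h1, dif_neg h1, dif_neg h2]
          have := hh i (by omega) x
          have hpow : (π ^ (2*(n+1)) : R) = π^2 * π^(2*n) := by ring
          calc (π ^ (2*(n+1)) : R) • (φ.f i x) = (π^2:R) • ((π^(2*n):R) • φ.f i x) := by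
                rw [hpow, mul_smul]
            _ = (π^2:R) • (f₂.f i (g i x) + M₂.d (i-1) i (h i x)
                  + DD M₂ i (h (i+1) (P₁.d i (i+1) x))) := by rw [this]
            _ = _ := by
                simp only [MC_smul_apply, smul_add, map_smul]

end Induction

end AuxLift

universe u

/-- **Lemma 4.5.** There is an integer `l ≥ 0` depending only on `b - a` such that: for every
commutative ring `R`, every `π ∈ R`, every morphism `α : M₁^• ⟶ M₂^•` of
`π`-`[a,b]`-pseudo-coherent complexes of `R`-modules, and all given `π`-`[a,b]`-pseudo
resolutions `fᵢ : Pᵢ^• ⟶ Mᵢ^•` (`i = 1, 2`), there is a morphism of complexes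
`α' : P₁^• ⟶ P₂^•` such that `(π^l • α) ∘ f₁` is homotopic to `f₂ ∘ α'`. -/
theorem isPiPseudoResolution_lift :
    ∃ l : ℤ → ℕ, ∀ (a b : ℤ), a ≤ b →
      ∀ (R : Type u) [CommRing R] (π : R) (M₁ M₂ : CochainComplex (ModuleCat R) ℤ)
        (α : M₁ ⟶ M₂),
        IsPiPseudoCoherent π a b M₁ → IsPiPseudoCoherent π a b M₂ →
        ∀ (P₁ P₂ : CochainComplex (ModuleCat R) ℤ) (f₁ : P₁ ⟶ M₁) (f₂ : P₂ ⟶ M₂),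
          IsPiPseudoResolution π a b f₁ → IsPiPseudoResolution π a b f₂ →
          ∃ α' : P₁ ⟶ P₂,
            Nonempty (Homotopy (f₁ ≫ (π ^ l (b - a) • α)) (α' ≫ f₂)) := by
  refine ⟨fun t => 2 * (t + 1).toNat, ?_⟩
  intro a b hab R _ π M₁ M₂ α _ _ P₁ P₂ f₁ f₂ hf₁ hf₂
  obtain ⟨hfree₁, hfin₁, hvan₁, hiso₁, hsurj₁⟩ := hf₁
  obtain ⟨hfree₂, hfin₂, hvan₂, hiso₂, hsurj₂⟩ := hf₂
  set n₀ : ℕ := (b + 1 - a).toNat with hn₀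
  have hl : 2 * (b - a + 1).toNat = 2 * n₀ := by omega
  have hπ : (π ^ (2 * (b - a + 1).toNat) : R) = π ^ (2 * n₀) := by rw [hl]
  set φ : P₁ ⟶ M₂ := f₁ ≫ α with hφ
  have hinj : ∀ i : ℤ, a < i → ∀ x, (HomologicalComplex.homologyMap f₂ i) x = 0 → π • x = 0 :=
    fun i hi => (hiso₂ i hi).1
  have hsurj : ∀ i : ℤ, a ≤ i → IsPiSurjective' π (HomologicalComplex.homologyMap f₂ i) := by
    intro i hi
    rcases eq_or_lt_of_le hi with hia | hia
    · subst hia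
      exact hsurj₂
    · exact (hiso₂ i hia).2
  obtain ⟨g, h, hg, hh⟩ := main_induction φ f₂ π a b hfree₁ hvan₁ hinj hsurj n₀
  have hbound : b + 1 - (n₀ : ℤ) = a := by omega
  rw [hbound] at hg hh
  -- extend the conditions to all degrees
  have cond1 : ∀ i : ℤ, ∀ x, P₂.d i (i+1) (g i x) = g (i+1) (P₁.d i (i+1) x) := by
    intro i x
    by_cases hia : a ≤ i
    · exact hg i hia x
    · have hx : x = 0 := hvan₁ i (Or.inl (by omega)) x
      subst hx
      rw [map_zero (ConcreteCategory.hom (g i)), map_zero (ConcreteCategory.hom (P₂.d i (i+1))), map_zero (ConcreteCategory.hom (P₁.d i (i+1))), map_zero (ConcreteCategory.hom (g (i+1)))]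
  have cond2 : ∀ i : ℤ, ∀ x, (π ^ (2*n₀)) • (φ.f i x)
      = f₂.f i (g i x) + M₂.d (i-1) i (h i x) + DD M₂ i (h (i+1) (P₁.d i (i+1) x)) := by
    intro i x
    by_cases hia : a ≤ i
    · exact hh i hia x
    · have hx : x = 0 := hvan₁ i (Or.inl (by omega)) x
      subst hx
      rw [map_zero (ConcreteCategory.hom (φ.f i)), map_zero (ConcreteCategory.hom (g i)), map_zero (ConcreteCategory.hom (f₂.f i)), map_zero (ConcreteCategory.hom (h i)),
        map_zero (ConcreteCategory.hom (M₂.d (i-1) i)), map_zero (ConcreteCategory.hom (P₁.d i (i+1))), map_zero (ConcreteCategory.hom (h (i+1))),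
        map_zero (ConcreteCategory.hom (DD M₂ i)), smul_zero, add_zero, add_zero]
  refine ⟨{ f := g, comm' := ?_ }, ⟨?_⟩⟩
  · intro i j hij
    have hij' : i + 1 = j := hij
    subst hij'
    exact ModuleCat.hom_ext (LinearMap.ext fun x => cond1 i x)
  · refine
      { hom := fun i j =>
          if hij : j + 1 = i then (h i) ≫ eqToHom (congrArg M₂.X (show i - 1 = j by omega))
          else 0
        zero := fun i j hij => dif_neg hij
        comm := fun i => ?_ }
    have hrel1 : (ComplexShape.up ℤ).Rel i (i+1) := rfl
    have hrel2 : (ComplexShape.up ℤ).Rel (i-1) i := by simp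
    rw [dNext_eq _ hrel1, prevD_eq _ hrel2]
    beta_reduce
    rw [dif_pos rfl, dif_pos (show (i-1) + 1 = i by omega)]
    refine ModuleCat.hom_ext (LinearMap.ext fun x => ?_)
    show (π ^ (2 * (b - a + 1).toNat) : R) • (φ.f i x)
      = eqToHom (congrArg M₂.X (show (i+1) - 1 = i by omega)) (h (i+1) (P₁.d i (i+1) x))
        + M₂.d (i-1) i (eqToHom (congrArg M₂.X (show i - 1 = i - 1 by omega)) (h i x))
        + f₂.f i (g i x)
    have he1 : eqToHom (congrArg M₂.X (show (i+1) - 1 = i by omega))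
        (h (i+1) (P₁.d i (i+1) x)) = DD M₂ i (h (i+1) (P₁.d i (i+1) x)) := rfl
    have he2 : eqToHom (congrArg M₂.X (show i - 1 = i - 1 by omega)) (h i x) = h i x := rfl
    rw [he1, he2, hπ, cond2 i x]
    abel
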